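/- arXiv:1510.08335 — 2 statements merged into one kernel-verified Lean document; each statement's English description precedes it below -/
import Mathlib

section
/- Let X be a real random variable on a finite probability space where every scenario has positive probability, and Δα⁺, Δα⁻ > 0. If x* minimizes f(x) = Δα⁺·E[(X-x)_+] + Δα⁻·E[(X-x)_-] + λ·x and λ = Δα⁺ (the distortion hits its upper bound), then x* ≤ X(ω) for all scenarios ω. -/
open Finset

/-- If `x*` minimizes `f(x) = Δα⁺ E[(X-x)_+] + Δα⁻ E[(X-x)_-] + λ x` and
`λ = Δα⁺`, then `x* ≤ X(ω)` for every scenario. -/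
theorem distortion_upper_bound_implies_below {Ω : Type*} [Fintype Ω] [Nonempty Ω]
    (p : Ω → ℝ) (hp : ∀ ω, 0 < p ω) (hsum : ∑ ω, p ω = 1)
    (X : Ω → ℝ) (Δp Δm lam : ℝ) (hΔp : 0 < Δp) (hΔm : 0 < Δm) (xs : ℝ)
    (hmin : ∀ y : ℝ,
        Δp * (∑ ω, p ω * max (X ω - xs) 0) + Δm * (∑ ω, p ω * max (xs - X ω) 0) + lam * xs
      ≤ Δp * (∑ ω, p ω * max (X ω - y) 0) + Δm * (∑ ω, p ω * max (y - X ω) 0) + lam * y)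
    (hlam : lam = Δp) :
    ∀ ω, xs ≤ X ω := by
  obtain ⟨ω₀, -, hy⟩ := Finset.exists_min_image (univ : Finset Ω) X ⟨Classical.arbitrary Ω, mem_univ _⟩
  set y := X ω₀ with hydef
  have hyle : ∀ ω, y ≤ X ω := fun ω => hy ω (mem_univ ω)
  have hB : ∑ ω, p ω * max (X ω - y) 0 = (∑ ω, p ω * X ω) - y := by
    have : ∀ ω ∈ (univ : Finset Ω), p ω * max (X ω - y) 0 = p ω * X ω - p ω * y := by
      intro ω _
      rw [max_eq_left (by linarith [hyle ω])]
      ring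
    rw [Finset.sum_congr rfl this, Finset.sum_sub_distrib, ← Finset.sum_mul, hsum, one_mul]
  have hBz : ∑ ω, p ω * max (y - X ω) 0 = 0 := by
    apply Finset.sum_eq_zero
    intro ω _
    rw [max_eq_right (by linarith [hyle ω])]
    ring
  have hA : (∑ ω, p ω * X ω) - xs ≤ ∑ ω, p ω * max (X ω - xs) 0 := by
    have : ∀ ω ∈ (univ : Finset Ω), p ω * X ω - p ω * xs ≤ p ω * max (X ω - xs) 0 := by
      intro ω _
      have h1 : X ω - xs ≤ max (X ω - xs) 0 := le_max_left _ _
      nlinarith [(hp ω).le]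
    calc (∑ ω, p ω * X ω) - xs = ∑ ω, (p ω * X ω - p ω * xs) := by
          rw [Finset.sum_sub_distrib, ← Finset.sum_mul, hsum, one_mul]
      _ ≤ _ := Finset.sum_le_sum this
  have h := hmin y
  rw [hB, hBz, hlam] at h
  have hS : ∑ ω, p ω * max (xs - X ω) 0 ≤ 0 := by nlinarith
  have hnn : ∀ ω ∈ (univ : Finset Ω), 0 ≤ p ω * max (xs - X ω) 0 := fun ω _ =>
    mul_nonneg (hp ω).le (le_max_right _ _)
  have hS0 : ∑ ω, p ω * max (xs - X ω) 0 = 0 := le_antisymm hS (Finset.sum_nonneg hnn)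
  intro ω
  have := (Finset.sum_eq_zero_iff_of_nonneg hnn).mp hS0 ω (mem_univ ω)
  have hmax : max (xs - X ω) 0 = 0 := by
    rcases mul_eq_zero.mp this with h' | h'
    · exact absurd h' (hp ω).ne'
    · exact h'
  have := le_max_left (xs - X ω) 0
  rw [hmax] at this
  linarith
end

section
/- Let X be a real random variable on a finite probability space where every scenario has positive probability, and Δα⁺, Δα⁻ > 0. If x* minimizes f(x) = Δα⁺·E[(X-x)_+] + Δα⁻·E[(X-x)_-] + λ·x and λ = -Δα⁻, then x* ≥ X(ω) for all scenarios ω. -/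
open Finset

/-- If `x*` minimizes `f(x) = Δα⁺ E[(X-x)_+] + Δα⁻ E[(X-x)_-] + λ x` and
`λ = -Δα⁻`, then `x* ≥ X(ω)` for every scenario. -/
theorem distortion_lower_bound_implies_above {Ω : Type*} [Fintype Ω] [Nonempty Ω]
    (p : Ω → ℝ) (hp : ∀ ω, 0 < p ω) (hsum : ∑ ω, p ω = 1)
    (X : Ω → ℝ) (Δp Δm lam : ℝ) (hΔp : 0 < Δp) (hΔm : 0 < Δm) (xs : ℝ)
    (hmin : ∀ y : ℝ,
        Δp * (∑ ω, p ω * max (X ω - xs) 0) + Δm * (∑ ω, p ω * max (xs - X ω) 0) + lam * xs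
      ≤ Δp * (∑ ω, p ω * max (X ω - y) 0) + Δm * (∑ ω, p ω * max (y - X ω) 0) + lam * y)
    (hlam : lam = -Δm) :
    ∀ ω, X ω ≤ xs := by
  subst hlam
  -- choose y = max of X
  obtain ⟨M, hM⟩ : ∃ M, ∀ ω, X ω ≤ M :=
    ⟨Finset.univ.sup' Finset.univ_nonempty X, fun ω => Finset.le_sup' X (mem_univ ω)⟩
  have key := hmin M
  -- identity: max (y - a) 0 = max (a - y) 0 + (y - a)
  have hid : ∀ y : ℝ, (∑ ω, p ω * max (y - X ω) 0)
      = (∑ ω, p ω * max (X ω - y) 0) + y - ∑ ω, p ω * X ω := by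
    intro y
    have : ∀ ω, p ω * max (y - X ω) 0
        = p ω * max (X ω - y) 0 + (p ω * y - p ω * X ω) := by
      intro ω
      rcases le_total (X ω) y with h | h
      · rw [max_eq_left (by linarith), max_eq_right (by linarith)]; ring
      · rw [max_eq_right (by linarith), max_eq_left (by linarith)]; ring
    rw [Finset.sum_congr rfl fun ω _ => this ω, Finset.sum_add_distrib,
      Finset.sum_sub_distrib, ← Finset.sum_mul, hsum]
    ring
  rw [hid M, hid xs] at key
  have hMz : (∑ ω, p ω * max (X ω - M) 0) = 0 := by
    apply Finset.sum_eq_zero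
    intro ω _
    rw [max_eq_right (by linarith [hM ω])]; ring
  rw [hMz] at key
  have hS : (∑ ω, p ω * max (X ω - xs) 0) ≤ 0 := by nlinarith
  have hterm : ∀ ω ∈ Finset.univ, p ω * max (X ω - xs) 0 = 0 := by
    apply (Finset.sum_eq_zero_iff_of_nonneg ?_).1 (le_antisymm hS ?_)
    · intro ω _
      exact mul_nonneg (hp ω).le (le_max_right _ _)
    · exact Finset.sum_nonneg fun ω _ => mul_nonneg (hp ω).le (le_max_right _ _)
  intro ω
  have h0 := hterm ω (mem_univ ω)
  have := mul_eq_zero.1 h0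
  rcases this with h | h
  · exact absurd h (hp ω).ne'
  · by_contra hc
    push_neg at hc
    rw [max_eq_left (by linarith)] at h
    linarith
end
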